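/- Define W(x) = (1/(2π))·√(x·(4 − x)) for x ∈ (0,4) (the Wigner semicircle density with radius 2 centered at x = 2). Then for every natural number m, ∫₀⁴ x^m · W(x) dx = A_m(2, 2) = binom(2m+2, m) / (m+1). -/

import Mathlib

open Real Finset Nat intervalIntegral MeasureTheory

lemma natprod (n : ℕ) : ∀ a : ℕ, n ≤ a →
    (∏ i ∈ Finset.Icc 1 n, (a + 1 - i)) * (a - n)! = a ! := by
  induction n with
  | zero => intro a _; simp
  | succ n ih =>
    intro a h
    rw [Finset.prod_Icc_succ_top (Nat.le_add_left 1 n)]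
    have h1 : n ≤ a := Nat.le_of_succ_le h
    have h2 : 1 ≤ a - n := Nat.le_sub_of_add_le (by omega)
    have h3 : a - (n+1) = (a - n) - 1 := by omega
    rw [h3, mul_assoc]
    have : (a + 1 - (n + 1)) * (a - n - 1)! = (a - n)! := by
      have : a + 1 - (n+1) = a - n := by omega
      rw [this]
      have : a - n = (a - n - 1) + 1 := by omega
      rw [this, Nat.factorial_succ]; simp
    rw [this, ih a h1]

lemma prodreal (n : ℕ) :
    ∏ i ∈ Finset.Icc 1 n, (((n : ℝ) + 1) * 2 + 2 - (i : ℝ))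
      = ((2*n+3)! : ℝ) / ((n+3)! : ℝ) := by
  have key := natprod n (2*n+3) (by omega)
  have cast_eq : ∏ i ∈ Finset.Icc 1 n, (((n : ℝ) + 1) * 2 + 2 - (i : ℝ))
      = ((∏ i ∈ Finset.Icc 1 n, (2*n+3 + 1 - i) : ℕ) : ℝ) := by
    push_cast
    apply Finset.prod_congr rfl
    intro i hi
    have hi' : i ≤ n := (Finset.mem_Icc.mp hi).2
    have : (((2*n+3+1 - i : ℕ) : ℝ)) = (2*n+4 : ℝ) - i := by
      have : i ≤ 2*n+3+1 := by omega
      push_cast [Nat.cast_sub this]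
      ring
    rw [this]; push_cast; ring
  rw [cast_eq]
  have hpos : ((n+3)! : ℝ) ≠ 0 := by positivity
  field_simp
  have : ((2*n+3) - n) = n + 3 := by omega
  rw [this] at key
  exact_mod_cast key

/-- The Raney numbers (two-parameter Fuss–Catalan numbers):
`A 0 (p,r) = 1` and `A m (p,r) = (r/m!)·∏_{i=1}^{m−1} (m·p + r − i)` for `m ≥ 1`. -/
noncomputable def raney (p r : ℝ) : ℕ → ℝ
  | 0 => 1
  | (m + 1) => (r / (Nat.factorial (m + 1) : ℝ)) *
      ∏ i ∈ Finset.Icc 1 m, (((m : ℝ) + 1) * p + r - (i : ℝ))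

lemma raney_eq (m : ℕ) :
    raney 2 2 m = (Nat.choose (2 * m + 2) m : ℝ) / ((m : ℝ) + 1) := by
  cases m with
  | zero => simp [raney]
  | succ n =>
    have hr : raney 2 2 (n+1)
        = (2 / ((n+1)! : ℝ)) * ∏ i ∈ Finset.Icc 1 n, (((n:ℝ)+1)*2+2 - (i:ℝ)) := rfl
    rw [hr, prodreal]
    have hc : (Nat.choose (2*(n+1)+2) (n+1) : ℝ)
        = (((2*n+4)! : ℕ) : ℝ) / ((((n+1)! : ℕ) : ℝ) * (((n+3)! : ℕ) : ℝ)) := by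
      have key := Nat.choose_mul_factorial_mul_factorial (show n+1 ≤ 2*n+4 by omega)
      have h2 : 2*n+4 - (n+1) = n+3 := by omega
      rw [h2] at key
      have h3 : 2*(n+1)+2 = 2*n+4 := by omega
      rw [h3]
      field_simp
      exact_mod_cast key
    rw [hc]
    have hfac : (((2*n+4)! : ℕ) : ℝ) = (2*(n:ℝ)+4) * (((2*n+3)! : ℕ) : ℝ) := by
      rw [show 2*n+4 = (2*n+3)+1 from rfl, Nat.factorial_succ]
      push_cast; ring
    rw [hfac]
    have h1 : (((n+1)! : ℕ) : ℝ) ≠ 0 := by positivity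
    have h2 : (((n+3)! : ℕ) : ℝ) ≠ 0 := by positivity
    have h3 : ((n:ℝ)+1) + 1 ≠ 0 := by positivity
    field_simp
    push_cast
    ring

lemma sqrt4 : Real.sqrt 4 = 2 := by
  rw [show (4:ℝ) = 2^2 by norm_num, Real.sqrt_sq (by norm_num : (0:ℝ) ≤ 2)]

lemma base_integral : (∫ x in (0:ℝ)..4, Real.sqrt (x*(4-x))) = 2*π := by
  have h1 : (∫ x in (0:ℝ)..4, Real.sqrt (x*(4-x)))
      = ∫ x in (0:ℝ)..4, (fun y : ℝ => 2 * Real.sqrt (1 - (y-1)^2)) (x/2) := by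
    apply intervalIntegral.integral_congr
    intro x _
    simp only
    rw [show x*(4-x) = 4*(1 - (x/2-1)^2) by ring,
      Real.sqrt_mul (by norm_num : (0:ℝ) ≤ 4), sqrt4]
  have h2 := intervalIntegral.integral_comp_div (a:=0) (b:=4) (c:=2)
    (f := fun y : ℝ => 2 * Real.sqrt (1 - (y-1)^2)) two_ne_zero
  norm_num at h2
  rw [h1]
  simp only [intervalIntegral.integral_const_mul]
  rw [h2]
  have h3 := intervalIntegral.integral_comp_sub_right (a:=0) (b:=2)
    (fun y : ℝ => Real.sqrt (1 - y^2)) 1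
  norm_num at h3
  rw [h3, integral_sqrt_one_sub_sq]
  ring

noncomputable def J (m : ℕ) : ℝ := ∫ x in (0:ℝ)..4, x^m * Real.sqrt (x*(4-x))

lemma cont_integrand (m : ℕ) : Continuous (fun x : ℝ => x^m * Real.sqrt (x*(4-x))) :=
  (continuous_pow m).mul (Real.continuous_sqrt.comp (by continuity))

lemma J_rec (m : ℕ) : ((m:ℝ)+3) * J (m+1) = (4*(m:ℝ)+6) * J m := by
  set f : ℝ → ℝ := fun x => x^m * (x*(4-x)) * Real.sqrt (x*(4-x)) with hf
  set g : ℝ → ℝ := fun x =>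
    Real.sqrt (x*(4-x)) * ((4*(m:ℝ)+6) * x^m - ((m:ℝ)+3) * x^(m+1)) with hg
  have hcontg : Continuous g := (Real.continuous_sqrt.comp (by continuity)).mul (by continuity)
  have hderiv : ∀ x ∈ Set.Ioo (0:ℝ) 4, HasDerivAt f (g x) x := by
    intro x hx
    obtain ⟨hx0, hx4⟩ := hx
    have hupos : 0 < x*(4-x) := mul_pos hx0 (by linarith)
    have hsne : Real.sqrt (x*(4-x)) ≠ 0 := by positivity
    have hs : Real.sqrt (x*(4-x)) * Real.sqrt (x*(4-x)) = x*(4-x) :=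
      Real.mul_self_sqrt hupos.le
    have hu : HasDerivAt (fun x : ℝ => x*(4-x)) (4 - 2*x) x := by
      have := (hasDerivAt_id x).mul ((hasDerivAt_const x (4:ℝ)).sub (hasDerivAt_id x))
      refine this.congr_deriv ?_
      show (1:ℝ) * (4 - x) + x * (0 - 1) = 4 - 2*x
      ring
    have hsq : HasDerivAt (fun x : ℝ => Real.sqrt (x*(4-x)))
        ((4-2*x)/(2*Real.sqrt (x*(4-x)))) x := hu.sqrt hupos.ne'
    have hpoly : HasDerivAt (fun x : ℝ => x^m * (x*(4-x)))
        (((m:ℝ))*x^(m-1)*(x*(4-x)) + x^m*(4-2*x)) x := by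
      exact (hasDerivAt_pow m x).mul hu
    have := hpoly.mul hsq
    refine this.congr_deriv ?_
    have hxm : ((m:ℝ)) * x^(m-1) * (x*(4-x)) = ((m:ℝ)) * x^m * (4-x) := by
      cases m with
      | zero => simp
      | succ k => simp only [Nat.add_sub_cancel, pow_succ]; push_cast; ring
    have key : x^m * (x*(4-x)) * ((4-2*x)/(2*Real.sqrt (x*(4-x))))
        = x^m*(2-x)*Real.sqrt (x*(4-x)) := by
      rw [mul_div_assoc', div_eq_iff (by positivity)]
      linear_combination (-2*x^m*(2-x)) * hs
    rw [hg]
    simp only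
    rw [key, hxm]
    ring
  have hint : IntervalIntegrable g volume 0 4 := hcontg.intervalIntegrable 0 4
  have h0 : (∫ x in (0:ℝ)..4, g x) = f 4 - f 0 :=
    intervalIntegral.integral_eq_sub_of_hasDeriv_right_of_le (by norm_num)
      ((by continuity : Continuous f).continuousOn)
      (fun x hx => (hderiv x hx).hasDerivWithinAt) hint
  have hf4 : f 4 = 0 := by simp [hf]
  have hf0 : f 0 = 0 := by simp [hf]
  have hsplit : (∫ x in (0:ℝ)..4, g x)
      = (4*(m:ℝ)+6) * J m - ((m:ℝ)+3) * J (m+1) := by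
    have hcongr : (∫ x in (0:ℝ)..4, g x)
        = ∫ x in (0:ℝ)..4, ((4*(m:ℝ)+6) * (x^m * Real.sqrt (x*(4-x)))
            - ((m:ℝ)+3) * (x^(m+1) * Real.sqrt (x*(4-x)))) := by
      apply intervalIntegral.integral_congr
      intro x _
      rw [hg]; simp only; ring
    rw [hcongr, intervalIntegral.integral_sub (f := fun x => (4*(m:ℝ)+6) * (x^m * Real.sqrt (x*(4-x))))
        (g := fun x => ((m:ℝ)+3) * (x^(m+1) * Real.sqrt (x*(4-x))))
        ((continuous_const.mul (cont_integrand m)).intervalIntegrable 0 4)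
        ((continuous_const.mul (cont_integrand (m+1))).intervalIntegrable 0 4),
      intervalIntegral.integral_const_mul, intervalIntegral.integral_const_mul]
    rfl
  rw [h0, hf4, hf0] at hsplit
  linarith

lemma chooseR (n : ℕ) : (Nat.choose (2*n+2) n : ℝ)
    = (((2*n+2)! : ℕ) : ℝ) / ((((n)! : ℕ) : ℝ) * (((n+2)! : ℕ) : ℝ)) := by
  have key := Nat.choose_mul_factorial_mul_factorial (show n ≤ 2*n+2 by omega)
  have h2 : 2*n+2 - n = n+2 := by omega
  rw [h2] at key
  field_simp
  exact_mod_cast key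

lemma J_val (m : ℕ) : J m = 2*π * ((Nat.choose (2*m+2) m : ℝ)/((m:ℝ)+1)) := by
  induction m with
  | zero =>
    have : J 0 = ∫ x in (0:ℝ)..4, Real.sqrt (x*(4-x)) := by
      rw [J]; apply intervalIntegral.integral_congr; intro x _; simp
    rw [this, base_integral]; norm_num
  | succ n ih =>
    have hrec := J_rec n
    rw [ih] at hrec
    have h3 : ((n:ℝ)+3) ≠ 0 := by positivity
    have hB : ((n:ℝ)+3) * (2*π * ((Nat.choose (2*(n+1)+2) (n+1) : ℝ)/(((n:ℝ)+1)+1)))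
        = (4*(n:ℝ)+6) * (2*π * ((Nat.choose (2*n+2) n : ℝ)/((n:ℝ)+1))) := by
      rw [chooseR, chooseR]
      have e1 : (((2*(n+1)+2)! : ℕ) : ℝ)
          = (2*(n:ℝ)+4) * (2*(n:ℝ)+3) * (((2*n+2)! : ℕ) : ℝ) := by
        rw [show 2*(n+1)+2 = (2*n+2)+1+1 by ring, Nat.factorial_succ, Nat.factorial_succ]
        push_cast; ring
      have e2 : (((n+1)! : ℕ) : ℝ) = ((n:ℝ)+1) * ((n ! : ℕ) : ℝ) := by
        rw [Nat.factorial_succ]; push_cast; ring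
      have e3 : (((n+1+2)! : ℕ) : ℝ) = ((n:ℝ)+3) * (((n+2)! : ℕ) : ℝ) := by
        rw [show n+1+2 = (n+2)+1 by ring, Nat.factorial_succ]; push_cast; ring
      rw [e1, e2, e3]
      have p1 : ((n ! : ℕ) : ℝ) ≠ 0 := by positivity
      have p2 : (((n+2)! : ℕ) : ℝ) ≠ 0 := by positivity
      have p3 : ((n:ℝ)+1) ≠ 0 := by positivity
      have p4 : ((n:ℝ)+2) ≠ 0 := by positivity
      field_simp
      ring
    rw [← hB] at hrec
    have := mul_left_cancel₀ h3 hrec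
    rw [this]
    push_cast
    ring_nf

/-- For the radius-2 Wigner semicircle density `W(x) = (1/(2π))·√(x·(4−x))`
on `(0,4)` and every natural `m`, `∫₀⁴ x^m·W(x) dx = A_m(2,2) = C(2m+2, m)/(m+1)`. -/
theorem stmt_18 (m : ℕ) :
    (∫ x in (0:ℝ)..4, x ^ m * ((1 / (2 * π)) * Real.sqrt (x * (4 - x)))) = raney 2 2 m ∧
    raney 2 2 m = (Nat.choose (2 * m + 2) m : ℝ) / ((m : ℝ) + 1) := by
  constructor
  · have h : (∫ x in (0:ℝ)..4, x ^ m * ((1 / (2 * π)) * Real.sqrt (x * (4 - x))))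
        = (1/(2*π)) * J m := by
      rw [J, ← intervalIntegral.integral_const_mul]
      apply intervalIntegral.integral_congr
      intro x _
      ring
    rw [h, J_val, raney_eq]
    have hπ : π ≠ 0 := Real.pi_ne_zero
    field_simp
  · exact raney_eq m
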